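/- Let d ∈ ℤ≥1, L ∈ 4ℤ≥1, g > 0 and Λ = (ℤ/Lℤ)^d. Then |Λ|^{-1} Σ_{ξ∈Λ*} ω_ξ² / (ω_ξ² + (g/2)²) ≥ 4^{-d} · d² / (d² + g²). -/

import Mathlib

open Matrix
open scoped Kronecker BigOperators ComplexOrder

/-- The discrete torus `Λ = (ℤ/Lℤ)^d`. -/
abbrev Lam (d L : ℕ) := Fin d → ZMod L

/-- The dispersion relation `ω_ξ = -∑_ν cos(ξ_ν)`, with the dual lattice
`Λ* = (2π/L)(ℤ/Lℤ)^d` identified with `Λ`. -/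
noncomputable def omega (d L : ℕ) (ξ : Lam d L) : ℝ :=
  - ∑ ν, Real.cos (2 * Real.pi * ((ξ ν).val : ℝ) / (L : ℝ))

/-- The torus distance of `z ∈ ℤ/Lℤ` to `0`. -/
def zdist (L : ℕ) (z : ZMod L) : ℕ := min z.val (L - z.val)

/-- The nearest-neighbour hopping matrix `T` on `ℓ²(Λ)`:
`T x y = -1` if the torus `ℓ¹`-distance of `x` and `y` is `1`, and `0` otherwise. -/
noncomputable def hopT (d L : ℕ) [NeZero L] : Matrix (Lam d L) (Lam d L) ℂ :=
  Matrix.of fun x y => if (∑ ν, zdist L (x ν - y ν)) = 1 then (-1 : ℂ) else 0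

/-- The gauge involution `G`, i.e. multiplication by `(-1)^x = (-1)^{x₁+⋯+x_d}`. -/
noncomputable def gaugeG (d L : ℕ) [NeZero L] : Matrix (Lam d L) (Lam d L) ℂ :=
  Matrix.diagonal fun x => (-1 : ℂ) ^ (∑ ν, (x ν).val)

/-- Pauli matrices. -/
noncomputable def sigma1 : Matrix (Fin 2) (Fin 2) ℂ := !![0, 1; 1, 0]
noncomputable def sigma2 : Matrix (Fin 2) (Fin 2) ℂ := !![0, Complex.I; -Complex.I, 0]
noncomputable def sigma3 : Matrix (Fin 2) (Fin 2) ℂ := !![1, 0; 0, -1]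

/-- `a⃗ · σ⃗` for a vector `a⃗ ∈ ℝ³`. -/
noncomputable def pauliDot (a : EuclideanSpace ℝ (Fin 3)) : Matrix (Fin 2) (Fin 2) ℂ :=
  (a 0 : ℂ) • sigma1 + (a 1 : ℂ) • sigma2 + (a 2 : ℂ) • sigma3

/-- The 2×2 spin block `γ_x` of a one-particle density matrix on `ℓ²(Λ)⊗ℂ²`. -/
noncomputable def spinBlock {d L : ℕ} [NeZero L]
    (γ : Matrix (Lam d L × Fin 2) (Lam d L × Fin 2) ℂ) (x : Lam d L) :
    Matrix (Fin 2) (Fin 2) ℂ :=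
  Matrix.of fun σ τ => γ (x, σ) (x, τ)

/-- The Hartree--Fock functional
`𝓔_HF(γ) = Tr[(T⊗1)γ] + (g/2) ∑_x (ρ_x² - |v⃗_x|²)`. -/
noncomputable def Ehf (d L : ℕ) [NeZero L] (g : ℝ)
    (γ : Matrix (Lam d L × Fin 2) (Lam d L × Fin 2) ℂ) : ℝ :=
  (((hopT d L) ⊗ₖ (1 : Matrix (Fin 2) (Fin 2) ℂ)) * γ).trace.re
    + g / 2 * ∑ x : Lam d L,
      (((spinBlock γ x).trace.re) ^ 2
        - (((sigma1 * spinBlock γ x).trace.re) ^ 2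
            + ((sigma2 * spinBlock γ x).trace.re) ^ 2
            + ((sigma3 * spinBlock γ x).trace.re) ^ 2))

/-- The constraint set `0 ≤ γ ≤ 1`, `Tr γ = N` of reduced one-particle density matrices. -/
def IsOPDM {d L : ℕ} [NeZero L] (N : ℕ)
    (γ : Matrix (Lam d L × Fin 2) (Lam d L × Fin 2) ℂ) : Prop :=
  γ.PosSemidef ∧ ((1 : Matrix (Lam d L × Fin 2) (Lam d L × Fin 2) ℂ) - γ).PosSemidef
    ∧ γ.trace = (N : ℂ)

/-- Spectral projection `1[A < 0]` onto the negative eigenvalues of a Hermitian matrix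
(junk value `0` if `A` is not Hermitian). -/
noncomputable def specProjNeg {n : Type*} [Fintype n] [DecidableEq n]
    (A : Matrix n n ℂ) : Matrix n n ℂ :=
  if hA : A.IsHermitian then
    (hA.eigenvectorUnitary : Matrix n n ℂ)
      * Matrix.diagonal (fun i => if hA.eigenvalues i < 0 then (1 : ℂ) else 0)
      * star (hA.eigenvectorUnitary : Matrix n n ℂ)
  else 0

/-- Spectral projection `1[A ≤ 0]` onto the nonpositive eigenvalues of a Hermitian matrix
(junk value `0` if `A` is not Hermitian). -/
noncomputable def specProjNonpos {n : Type*} [Fintype n] [DecidableEq n]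
    (A : Matrix n n ℂ) : Matrix n n ℂ :=
  if hA : A.IsHermitian then
    (hA.eigenvectorUnitary : Matrix n n ℂ)
      * Matrix.diagonal (fun i => if hA.eigenvalues i ≤ 0 then (1 : ℂ) else 0)
      * star (hA.eigenvectorUnitary : Matrix n n ℂ)
  else 0

/-- The positive square root `√A` of a positive semidefinite Hermitian matrix
(junk value `0` if `A` is not Hermitian). -/
noncomputable def matSqrt {n : Type*} [Fintype n] [DecidableEq n]
    (A : Matrix n n ℂ) : Matrix n n ℂ :=
  if hA : A.IsHermitian then
    (hA.eigenvectorUnitary : Matrix n n ℂ)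
      * Matrix.diagonal (fun i => (Real.sqrt (hA.eigenvalues i) : ℂ))
      * star (hA.eigenvectorUnitary : Matrix n n ℂ)
  else 0

/-- The negative part `A₋ = (A - |A|)/2` of a Hermitian matrix, i.e. the spectral
function `λ ↦ min λ 0` applied to `A` (junk value `0` if `A` is not Hermitian). -/
noncomputable def matNegPart {n : Type*} [Fintype n] [DecidableEq n]
    (A : Matrix n n ℂ) : Matrix n n ℂ :=
  if hA : A.IsHermitian then
    (hA.eigenvectorUnitary : Matrix n n ℂ)
      * Matrix.diagonal (fun i => ((min (hA.eigenvalues i) 0 : ℝ) : ℂ))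
      * star (hA.eigenvectorUnitary : Matrix n n ℂ)
  else 0

/-- The sign `(-1)^x = (-1)^{x₁+⋯+x_d}` of a lattice site, as a real number. -/
noncomputable def latSign {d L : ℕ} (x : Lam d L) : ℝ := (-1 : ℝ) ^ (∑ ν, (x ν).val)

/-- The spin values `↑ ≡ +1`, `↓ ≡ -1`. -/
noncomputable def spinVal (τ : Fin 2) : ℝ := if τ = 0 then 1 else -1
lemma aux_cos_ge (L : ℕ) (hLpos : 0 < L) (k : ℕ) (hk : k ≤ L / 6) :
    (1 : ℝ) / 2 ≤ Real.cos (2 * Real.pi * (k : ℝ) / (L : ℝ)) := by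
  have h6 : 6 * k ≤ L := by omega
  have hLr : (0 : ℝ) < (L : ℝ) := by exact_mod_cast hLpos
  have h6r : (k : ℝ) * 6 ≤ (L : ℝ) := by exact_mod_cast by omega
  have hθ0 : 0 ≤ 2 * Real.pi * (k : ℝ) / (L : ℝ) := by positivity
  have hθ : 2 * Real.pi * (k : ℝ) / (L : ℝ) ≤ Real.pi / 3 := by
    rw [div_le_div_iff₀ hLr (by norm_num : (0:ℝ) < 3)]
    nlinarith [Real.pi_pos]
  have := Real.cos_le_cos_of_nonneg_of_le_pi hθ0
    (by nlinarith [Real.pi_pos] : Real.pi / 3 ≤ Real.pi) hθ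
  rw [Real.cos_pi_div_three] at this
  linarith

lemma cos_ge_of_zdist (L : ℕ) [NeZero L] (z : ZMod L) (hz : zdist L z ≤ L / 6) :
    (1 : ℝ) / 2 ≤ Real.cos (2 * Real.pi * ((z.val : ℕ) : ℝ) / (L : ℝ)) := by
  have hLpos : 0 < L := Nat.pos_of_ne_zero (NeZero.ne L)
  have hkL : z.val < L := ZMod.val_lt z
  unfold zdist at hz
  rcases le_or_gt z.val (L - z.val) with h | h
  · exact aux_cos_ge L hLpos z.val (by omega)
  · have hz' : L - z.val ≤ L / 6 := by omega
    set k' := L - z.val with hk'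
    have hval : z.val = L - k' := by omega
    have hcast : ((z.val : ℕ) : ℝ) = (L : ℝ) - (k' : ℝ) := by
      rw [hval]; push_cast [Nat.cast_sub (by omega : k' ≤ L)]; ring
    have hLr : ((L : ℝ)) ≠ 0 := by positivity
    have hang : 2 * Real.pi * ((z.val : ℕ) : ℝ) / (L : ℝ)
        = 2 * Real.pi - 2 * Real.pi * (k' : ℝ) / (L : ℝ) := by
      rw [hcast]; field_simp
    rw [hang, Real.cos_two_pi_sub]
    exact aux_cos_ge L hLpos k' hz'

lemma card_zdist_ge (L m : ℕ) [NeZero L] (hm : 1 ≤ m) (hLm : L = 4 * m) :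
    m ≤ (Finset.univ.filter (fun z : ZMod L => zdist L z ≤ L / 6)).card := by
  classical
  set t := L / 6 with ht
  have h2t : m ≤ 2 * t + 1 := by omega
  have htL : 2 * t < L := by omega
  set f : ℕ → ZMod L := fun j => if j ≤ t then ((j : ℕ) : ZMod L)
    else -(((j - t : ℕ) : ℕ) : ZMod L) with hf
  have hval : ∀ j < m, (f j).val = if j ≤ t then j else L - (j - t) := by
    intro j hj
    by_cases hjt : j ≤ t
    · simp only [hf, if_pos hjt, ZMod.val_natCast, Nat.mod_eq_of_lt (by omega : j < L)]
    · have h1 : 0 < j - t := by omega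
      have h2 : j - t < L := by omega
      have hvv : (((j - t : ℕ) : ZMod L)).val = j - t := by
        rw [ZMod.val_natCast, Nat.mod_eq_of_lt h2]
      have hne : (((j - t : ℕ) : ZMod L)) ≠ 0 := by
        intro h0
        rw [← ZMod.val_eq_zero] at h0
        omega
      simp only [hf, if_neg hjt, ZMod.neg_val, if_neg hne, hvv]
  have hmem : ∀ j ∈ Finset.range m,
      f j ∈ Finset.univ.filter (fun z : ZMod L => zdist L z ≤ t) := by
    intro j hj
    rw [Finset.mem_range] at hj
    simp only [Finset.mem_filter, Finset.mem_univ, true_and]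
    unfold zdist
    rw [hval j hj]
    by_cases hjt : j ≤ t
    · rw [if_pos hjt]; omega
    · rw [if_neg hjt]; omega
  have hinj : Set.InjOn f (Finset.range m) := by
    intro j₁ hj₁ j₂ hj₂ heq
    rw [Finset.coe_range, Set.mem_Iio] at hj₁ hj₂
    have : (f j₁).val = (f j₂).val := by rw [heq]
    rw [hval j₁ hj₁, hval j₂ hj₂] at this
    by_cases h1 : j₁ ≤ t <;> by_cases h2 : j₂ ≤ t <;>
      simp only [if_pos, if_neg, h1, h2, if_true, if_false] at this <;> omega
  calc m = (Finset.range m).card := (Finset.card_range m).symm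
    _ ≤ _ := Finset.card_le_card_of_injOn f hmem hinj

/-- The lower bound
`|Λ|⁻¹ Σ_ξ ω_ξ²/(ω_ξ² + (g/2)²) ≥ 4⁻ᵈ · d²/(d² + g²)`. -/
theorem dispersion_average_lower_bound (d L : ℕ) [NeZero L] (hd : 1 ≤ d)
    (hL : ∃ m : ℕ, 1 ≤ m ∧ L = 4 * m) (g : ℝ) (hg : 0 < g) :
    ((L : ℝ) ^ d)⁻¹ * ∑ ξ : Lam d L, omega d L ξ ^ 2 / (omega d L ξ ^ 2 + (g / 2) ^ 2)
      ≥ ((4 : ℝ) ^ d)⁻¹ * ((d : ℝ) ^ 2 / ((d : ℝ) ^ 2 + g ^ 2)) := by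
  classical
  obtain ⟨m, hm, hLm⟩ := hL
  have hLpos : 0 < L := by omega
  set c : ℝ := (d : ℝ) ^ 2 / ((d : ℝ) ^ 2 + g ^ 2) with hc
  have hdr : (1 : ℝ) ≤ (d : ℝ) := by exact_mod_cast hd
  have hc0 : 0 ≤ c := by positivity
  set S₀ : Finset (ZMod L) := Finset.univ.filter (fun z : ZMod L => zdist L z ≤ L / 6)
    with hS₀
  set S : Finset (Lam d L) := Fintype.piFinset (fun _ : Fin d => S₀) with hS
  have hcard₀ : m ≤ S₀.card := card_zdist_ge L m hm hLm
  have hcardS : m ^ d ≤ S.card := by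
    rw [hS, Fintype.card_piFinset]
    calc m ^ d = ∏ _i : Fin d, m := by simp
      _ ≤ ∏ _i : Fin d, S₀.card := Finset.prod_le_prod (fun _ _ => Nat.zero_le _)
          (fun _ _ => hcard₀)
  -- bound on each term in S
  set F : Lam d L → ℝ := fun ξ => omega d L ξ ^ 2 / (omega d L ξ ^ 2 + (g / 2) ^ 2)
    with hF
  have hFnonneg : ∀ ξ : Lam d L, 0 ≤ F ξ := by
    intro ξ; rw [hF]; positivity
  have hbound : ∀ ξ ∈ S, c ≤ F ξ := by
    intro ξ hξ
    rw [hS, Fintype.mem_piFinset] at hξ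
    have hcos : ∀ ν : Fin d, (1 : ℝ) / 2 ≤
        Real.cos (2 * Real.pi * (((ξ ν).val : ℕ) : ℝ) / (L : ℝ)) := by
      intro ν
      have := hξ ν
      rw [hS₀, Finset.mem_filter] at this
      exact cos_ge_of_zdist L (ξ ν) this.2
    have hsum : (d : ℝ) / 2 ≤
        ∑ ν : Fin d, Real.cos (2 * Real.pi * (((ξ ν).val : ℕ) : ℝ) / (L : ℝ)) := by
      calc (d : ℝ) / 2 = ∑ _ν : Fin d, (1 : ℝ) / 2 := by
            simp [Finset.sum_const]; ring
        _ ≤ _ := Finset.sum_le_sum (fun ν _ => hcos ν)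
    have hω : omega d L ξ ≤ -((d : ℝ) / 2) := by
      rw [omega]; linarith
    have hω2 : ((d : ℝ) / 2) ^ 2 ≤ omega d L ξ ^ 2 := by nlinarith
    rw [hF, hc, div_le_div_iff₀ (by positivity) (by positivity)]
    nlinarith [sq_nonneg g]
  have h3 : (S.card : ℝ) * c ≤ ∑ ξ ∈ S, F ξ := by
    have := Finset.card_nsmul_le_sum S F c hbound
    simpa [nsmul_eq_mul] using this
  have h2 : ∑ ξ ∈ S, F ξ ≤ ∑ ξ : Lam d L, F ξ :=
    Finset.sum_le_sum_of_subset_of_nonneg (Finset.subset_univ S)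
      (fun i _ _ => hFnonneg i)
  have h4 : ((m : ℝ)) ^ d * c ≤ (S.card : ℝ) * c := by
    apply mul_le_mul_of_nonneg_right _ hc0
    exact_mod_cast hcardS
  have hmain : ((m : ℝ)) ^ d * c ≤ ∑ ξ : Lam d L, F ξ := le_trans h4 (le_trans h3 h2)
  have hmr : (0 : ℝ) < (m : ℝ) := by exact_mod_cast hm
  have hL4 : (L : ℝ) = 4 * (m : ℝ) := by exact_mod_cast hLm
  have heq : ((L : ℝ) ^ d)⁻¹ * (((m : ℝ)) ^ d * c) = ((4 : ℝ) ^ d)⁻¹ * c := by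
    rw [hL4, mul_pow, mul_inv]
    have : ((m : ℝ) ^ d)⁻¹ * ((m : ℝ) ^ d) = 1 := by
      rw [inv_mul_cancel₀ (by positivity)]
    calc ((4:ℝ) ^ d)⁻¹ * ((m:ℝ) ^ d)⁻¹ * ((m:ℝ) ^ d * c)
        = ((4:ℝ) ^ d)⁻¹ * ((((m:ℝ) ^ d)⁻¹ * ((m:ℝ) ^ d)) * c) := by ring
      _ = ((4:ℝ) ^ d)⁻¹ * c := by rw [this, one_mul]
  rw [ge_iff_le, ← heq]
  exact mul_le_mul_of_nonneg_left hmain (by positivity)
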